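/- Let G be a finite simple graph on N vertices with M edges, adjacency matrix A, orthonormal eigenbasis {u_k} with eigenvalues ε_k, and uniform overlaps w_k = (𝟙ᵀu_k)². Let ε_max = max_k ε_k. Then for every index k with ε_k ≠ ε_max, one has w_k ≤ N·(ε_max − 2M/N)/(ε_max − ε_k). -/

import Mathlib

open Matrix

/-- Bound on uniform overlap growth: for a finite simple graph `G` on
`N` vertices with `M` edges, adjacency matrix with orthonormal eigenbasis `u k`,
eigenvalues `ε k`, uniform overlaps `w k = (𝟙ᵀ u k)²`, and largest eigenvalue `ε_max`,
every index `k` with `ε k ≠ ε_max` satisfies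
`w k ≤ N (ε_max - 2M/N)/(ε_max - ε k)`. -/

theorem stmt_17 {N : ℕ} (G : SimpleGraph (Fin N)) [DecidableRel G.Adj]
    (u : Fin N → Fin N → ℝ) (ε : Fin N → ℝ)
    (horth : ∀ k l, (∑ i, u k i * u l i) = if k = l then (1 : ℝ) else 0)
    (heig : ∀ k, (G.adjMatrix ℝ).mulVec (u k) = ε k • u k)
    (εmax : ℝ) (hεmax : IsGreatest (Set.range ε) εmax) :
    ∀ k, ε k ≠ εmax →
      (∑ i, u k i) ^ 2 ≤
        (N : ℝ) * (εmax - 2 * (G.edgeFinset.card : ℝ) / (N : ℝ)) / (εmax - ε k) := by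
  intro k hk
  set A := G.adjMatrix ℝ with hA
  set U : Matrix (Fin N) (Fin N) ℝ := Matrix.of u with hU
  have hUU : U * Uᵀ = 1 := by
    ext a b
    simpa [Matrix.mul_apply, Matrix.one_apply, hU] using horth a b
  have hUtU : Uᵀ * U = 1 := mul_eq_one_comm.mp hUU
  have hcomp : ∀ i j, (∑ l, u l i * u l j) = if i = j then (1 : ℝ) else 0 := by
    intro i j
    have := congrFun (congrFun hUtU i) j
    simpa [Matrix.mul_apply, Matrix.one_apply, hU, Matrix.transpose_apply] using this
  have heig' : ∀ l i, (∑ m, A i m * u l m) = ε l * u l i := by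
    intro l i
    have := congrFun (heig l) i
    simpa [Matrix.mulVec, dotProduct] using this
  have hAij : ∀ i j, A i j = ∑ l, ε l * (u l i * u l j) := by
    intro i j
    calc A i j = ∑ m, A i m * (if m = j then (1:ℝ) else 0) := by simp
      _ = ∑ m, A i m * (∑ l, u l m * u l j) := by
          refine Finset.sum_congr rfl fun m _ => ?_
          rw [hcomp]
      _ = ∑ m, ∑ l, A i m * (u l m * u l j) := by
          simp [Finset.mul_sum]
      _ = ∑ l, ∑ m, A i m * (u l m * u l j) := Finset.sum_comm
      _ = ∑ l, (∑ m, A i m * u l m) * u l j := by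
          refine Finset.sum_congr rfl fun l _ => ?_
          rw [Finset.sum_mul]
          exact Finset.sum_congr rfl fun m _ => by ring
      _ = ∑ l, ε l * (u l i * u l j) := by
          refine Finset.sum_congr rfl fun l _ => ?_
          rw [heig']
          ring
  -- c l = ∑ i, u l i
  have hsum2M : ∑ l, ε l * (∑ i, u l i) ^ 2 = 2 * (G.edgeFinset.card : ℝ) := by
    have h1 : ∑ i, ∑ j, A i j = 2 * (G.edgeFinset.card : ℝ) := by
      have hdeg : ∀ i : Fin N, ∑ j, A i j = (G.degree i : ℝ) := by
        intro i
        simp [hA, SimpleGraph.adjMatrix_apply, SimpleGraph.degree,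
          SimpleGraph.neighborFinset, Finset.sum_ite_eq, Finset.sum_boole]
      rw [Finset.sum_congr rfl fun i _ => hdeg i]
      rw [← Nat.cast_sum]
      rw [SimpleGraph.sum_degrees_eq_twice_card_edges]
      push_cast; ring
    calc ∑ l, ε l * (∑ i, u l i) ^ 2
        = ∑ l, ∑ i, ∑ j, ε l * (u l i * u l j) := by
          refine Finset.sum_congr rfl fun l _ => ?_
          rw [sq, Finset.sum_mul_sum]
          simp [Finset.mul_sum]
      _ = ∑ i, ∑ j, ∑ l, ε l * (u l i * u l j) := by
          rw [Finset.sum_comm]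
          exact Finset.sum_congr rfl fun i _ => Finset.sum_comm
      _ = ∑ i, ∑ j, A i j := by
          refine Finset.sum_congr rfl fun i _ => Finset.sum_congr rfl fun j _ => ?_
          rw [hAij]
      _ = 2 * (G.edgeFinset.card : ℝ) := h1
  have hsumN : ∑ l, (∑ i, u l i) ^ 2 = (N : ℝ) := by
    calc ∑ l, (∑ i, u l i) ^ 2
        = ∑ l, ∑ i, ∑ j, u l i * u l j := by
          refine Finset.sum_congr rfl fun l _ => ?_
          rw [sq, Finset.sum_mul_sum]
      _ = ∑ i, ∑ j, ∑ l, u l i * u l j := by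
          rw [Finset.sum_comm]
          exact Finset.sum_congr rfl fun i _ => Finset.sum_comm
      _ = ∑ i : Fin N, (1 : ℝ) := by
          refine Finset.sum_congr rfl fun i _ => ?_
          rw [Finset.sum_congr rfl fun j _ => hcomp i j]
          simp
      _ = (N : ℝ) := by simp
  have hub : ∀ l, ε l ≤ εmax := fun l => hεmax.2 ⟨l, rfl⟩
  have hkey : (∑ i, u k i) ^ 2 * (εmax - ε k) ≤ (N : ℝ) * εmax - 2 * (G.edgeFinset.card : ℝ) := by
    have hle : (∑ i, u k i) ^ 2 * (εmax - ε k) ≤ ∑ l, (∑ i, u l i) ^ 2 * (εmax - ε l) := by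
      refine Finset.single_le_sum (f := fun l => (∑ i, u l i) ^ 2 * (εmax - ε l)) (fun l _ => ?_) (Finset.mem_univ k)
      exact mul_nonneg (sq_nonneg _) (sub_nonneg.mpr (hub l))
    calc (∑ i, u k i) ^ 2 * (εmax - ε k)
        ≤ ∑ l, (∑ i, u l i) ^ 2 * (εmax - ε l) := hle
      _ = (∑ l, (∑ i, u l i) ^ 2) * εmax - ∑ l, ε l * (∑ i, u l i) ^ 2 := by
          rw [Finset.sum_mul, ← Finset.sum_sub_distrib]
          refine Finset.sum_congr rfl fun l _ => ?_
          ring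
      _ = (N : ℝ) * εmax - 2 * (G.edgeFinset.card : ℝ) := by rw [hsumN, hsum2M]
  have hNpos : (0 : ℝ) < N := by
    have : 0 < N := Fin.pos k
    exact_mod_cast this
  have hεpos : 0 < εmax - ε k := sub_pos.mpr (lt_of_le_of_ne (hub k) hk)
  rw [le_div_iff₀ hεpos]
  have : (N : ℝ) * (εmax - 2 * (G.edgeFinset.card : ℝ) / (N : ℝ))
      = (N : ℝ) * εmax - 2 * (G.edgeFinset.card : ℝ) := by
    field_simp
  rw [this]
  exact hkey
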